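/- arXiv:2406.10686 — 2 statements merged into one kernel-verified Lean document; each statement's English description precedes it below -/
import Mathlib

section
/- Let A = [a₁ … a_n] and Ā = [ā₁ … ā_n] be p×n real matrices with ‖a_i − ā_i‖ ≤ ε and ‖a_i‖ ≤ C for all i, where 0 < ε ≤ C. Then log det(I_p + A Aᵀ) ≤ log det(I_p + Ā Āᵀ) + p·log(1 + 3Cnε). -/
open Matrix

private theorem my_cs_abs {p : ℕ} (u x : Fin p → ℝ) :
    |∑ j, u j * x j| ≤ Real.sqrt (∑ j, u j ^ 2) * Real.sqrt (∑ j, x j ^ 2) := by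
  have h := Finset.sum_mul_sq_le_sq_mul_sq Finset.univ u x
  calc |∑ j, u j * x j| = Real.sqrt ((∑ j, u j * x j) ^ 2) := (Real.sqrt_sq_eq_abs _).symm
    _ ≤ Real.sqrt ((∑ j, u j ^ 2) * ∑ j, x j ^ 2) := Real.sqrt_le_sqrt h
    _ = Real.sqrt (∑ j, u j ^ 2) * Real.sqrt (∑ j, x j ^ 2) :=
        Real.sqrt_mul (Finset.sum_nonneg fun j _ => sq_nonneg _) _

private theorem my_tri {p : ℕ} (u v : Fin p → ℝ) :
    Real.sqrt (∑ j, (u j + v j) ^ 2) ≤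
      Real.sqrt (∑ j, u j ^ 2) + Real.sqrt (∑ j, v j ^ 2) := by
  have hcs : |∑ j, u j * v j| ≤ Real.sqrt (∑ j, u j ^ 2) * Real.sqrt (∑ j, v j ^ 2) :=
    my_cs_abs u v
  have hu : Real.sqrt (∑ j, u j ^ 2) ^ 2 = ∑ j, u j ^ 2 :=
    Real.sq_sqrt (Finset.sum_nonneg fun j _ => sq_nonneg _)
  have hv : Real.sqrt (∑ j, v j ^ 2) ^ 2 = ∑ j, v j ^ 2 :=
    Real.sq_sqrt (Finset.sum_nonneg fun j _ => sq_nonneg _)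
  have hexp : ∑ j, (u j + v j) ^ 2 = (∑ j, u j ^ 2) + 2 * (∑ j, u j * v j) + ∑ j, v j ^ 2 := by
    simp_rw [add_sq, mul_assoc]
    rw [Finset.sum_add_distrib, Finset.sum_add_distrib, ← Finset.mul_sum]
  have hle : ∑ j, (u j + v j) ^ 2 ≤
      (Real.sqrt (∑ j, u j ^ 2) + Real.sqrt (∑ j, v j ^ 2)) ^ 2 := by
    rw [hexp, add_sq, hu, hv]
    have := abs_le.mp hcs
    linarith [this.2]
  calc Real.sqrt (∑ j, (u j + v j) ^ 2)
      ≤ Real.sqrt ((Real.sqrt (∑ j, u j ^ 2) + Real.sqrt (∑ j, v j ^ 2)) ^ 2) :=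
        Real.sqrt_le_sqrt hle
    _ = _ := by
        rw [Real.sqrt_sq (by positivity)]

private theorem my_det_ge_one {p : ℕ} (P : Matrix (Fin p) (Fin p) ℝ)
    (h : (P - 1).PosSemidef) : 1 ≤ P.det := by
  have hH : P.IsHermitian := by
    have := h.isHermitian
    have h2 : P = (P - 1) + 1 := by abel
    rw [h2]
    exact this.add (Matrix.isHermitian_one)
  have heach : ∀ i, (1 : ℝ) ≤ hH.eigenvalues i := by
    intro i
    set v : Fin p → ℝ := ⇑(hH.eigenvectorBasis i) with hv
    have hvv : dotProduct (star v) v = 1 := by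
      have h1 : ‖(hH.eigenvectorBasis i : EuclideanSpace ℝ (Fin p))‖ = 1 :=
        hH.eigenvectorBasis.orthonormal.1 i
      have h2 : (inner ℝ (hH.eigenvectorBasis i) (hH.eigenvectorBasis i) : ℝ) = 1 := by
        rw [real_inner_self_eq_norm_sq, h1]; norm_num
      rw [EuclideanSpace.inner_eq_star_dotProduct] at h2
      simpa using h2
    have heig := hH.eigenvalues_eq i
    have hq := h.dotProduct_mulVec_nonneg v
    have hexp : dotProduct (star v) (P *ᵥ v)
        = dotProduct (star v) ((P - 1) *ᵥ v) + dotProduct (star v) v := by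
      rw [Matrix.sub_mulVec, dotProduct_sub, Matrix.one_mulVec]
      ring
    rw [heig]
    simp only [RCLike.re_to_real] at *
    rw [hexp, hvv]
    linarith
  have hdet : P.det = ∏ i, hH.eigenvalues i := by
    rw [hH.det_eq_prod_eigenvalues]; norm_num
  rw [hdet]
  calc (1 : ℝ) = ∏ _i : Fin p, 1 := by simp
    _ ≤ ∏ i, hH.eigenvalues i :=
        Finset.prod_le_prod (by norm_num) (fun i _ => heach i)

private theorem my_det_mono {p : ℕ} (M N : Matrix (Fin p) (Fin p) ℝ)
    (hM : M.PosDef) (h : (N - M).PosSemidef) : M.det ≤ N.det := by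
  have hMs : M.PosSemidef := hM.posSemidef
  open MatrixOrder in set S := CFC.sqrt M with hSdef
  open MatrixOrder in have hS : S.PosSemidef := (CFC.sqrt_nonneg M).posSemidef
  open MatrixOrder in have hSS : S * S = M := CFC.sqrt_mul_sqrt_self M hMs.nonneg
  have hdetM : 0 < M.det := hM.det_pos
  have hdetS : S.det ≠ 0 := by
    intro h0
    rw [← hSS, Matrix.det_mul, h0, mul_zero] at hdetM
    exact lt_irrefl _ hdetM
  have hSunit : IsUnit S.det := isUnit_iff_ne_zero.mpr hdetS
  have hST : S * S⁻¹ = 1 := Matrix.mul_nonsing_inv S hSunit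
  have hTS : S⁻¹ * S = 1 := Matrix.nonsing_inv_mul S hSunit
  set T := S⁻¹ with hTdef
  have hTherm : Tᴴ = T := by
    rw [hTdef, Matrix.conjTranspose_nonsing_inv, hS.isHermitian.eq]
  have hconj : (T * (N - M) * Tᴴ).PosSemidef := h.mul_mul_conjTranspose_same T
  rw [hTherm] at hconj
  have hkey : T * (N - M) * T = T * N * T - 1 := by
    rw [Matrix.mul_sub, Matrix.sub_mul, ← hSS]
    have : T * (S * S) * T = 1 := by
      rw [← Matrix.mul_assoc, hTS, Matrix.one_mul, hST]
    rw [this]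
  rw [hkey] at hconj
  have h1 : 1 ≤ (T * N * T).det := my_det_ge_one _ hconj
  have hdet1 : S.det * T.det = 1 := by
    rw [← Matrix.det_mul, hST, Matrix.det_one]
  have hexp : (T * N * T).det = T.det * N.det * T.det := by
    rw [Matrix.det_mul, Matrix.det_mul]
  have hMdet : M.det = S.det * S.det := by rw [← hSS, Matrix.det_mul]
  have hNdet : N.det = S.det * S.det * (T * N * T).det := by
    rw [hexp]
    linear_combination (-N.det * (S.det * T.det + 1)) * hdet1
  have hs2 : (0:ℝ) ≤ S.det * S.det := mul_self_nonneg _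
  have hfin := mul_le_mul_of_nonneg_left h1 hs2
  rw [mul_one] at hfin
  linarith [hMdet, hNdet, hfin]

private theorem my_quad {p n : ℕ} (A : Matrix (Fin p) (Fin n) ℝ) (x : Fin p → ℝ) :
    dotProduct x ((A * A.transpose) *ᵥ x) = ∑ i, (∑ j, A j i * x j) ^ 2 := by
  rw [← Matrix.mulVec_mulVec, Matrix.dotProduct_mulVec, ← Matrix.mulVec_transpose]
  simp only [Matrix.mulVec, dotProduct, Matrix.transpose_apply]
  congr 1; ext i; ring

private theorem my_smul_psd {p : ℕ} {c : ℝ} (hc : 0 ≤ c) {M : Matrix (Fin p) (Fin p) ℝ}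
    (hM : M.PosSemidef) : (c • M).PosSemidef := by
  refine Matrix.PosSemidef.of_dotProduct_mulVec_nonneg ?_ fun x => ?_
  · unfold Matrix.IsHermitian
    rw [Matrix.conjTranspose_smul, hM.isHermitian.eq]
    simp
  · rw [Matrix.smul_mulVec, dotProduct_smul, smul_eq_mul]
    exact mul_nonneg hc (hM.dotProduct_mulVec_nonneg x)

theorem logdet_perturb_first {p n : ℕ} (A Abar : Matrix (Fin p) (Fin n) ℝ) (ε C : ℝ)
    (hε : 0 < ε) (hεC : ε ≤ C)
    (hdiff : ∀ i : Fin n, Real.sqrt (∑ j, (A j i - Abar j i) ^ 2) ≤ ε)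
    (hnorm : ∀ i : Fin n, Real.sqrt (∑ j, (A j i) ^ 2) ≤ C) :
    Real.log ((1 + A * A.transpose).det) ≤
      Real.log ((1 + Abar * Abar.transpose).det) + p * Real.log (1 + 3 * C * n * ε) := by
  have hC : 0 < C := lt_of_lt_of_le hε hεC
  set δ : ℝ := 3 * C * n * ε with hδdef
  have hδ : 0 ≤ δ := by positivity
  have hAT : A.transpose = Aᴴ := (A.conjTranspose_eq_transpose_of_trivial).symm
  have hAbarT : Abar.transpose = Abarᴴ := (Abar.conjTranspose_eq_transpose_of_trivial).symm
  have hpsdA : (A * A.transpose).PosSemidef := by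
    rw [hAT]; exact Matrix.posSemidef_self_mul_conjTranspose A
  have hpsdAbar : (Abar * Abar.transpose).PosSemidef := by
    rw [hAbarT]; exact Matrix.posSemidef_self_mul_conjTranspose Abar
  have hM : (1 + A * A.transpose).PosDef := Matrix.PosDef.one.add_posSemidef hpsdA
  have hMbar : (1 + Abar * Abar.transpose).PosDef := Matrix.PosDef.one.add_posSemidef hpsdAbar
  -- the key positive semidefiniteness
  have hkey : (Abar * Abar.transpose + δ • (1 : Matrix (Fin p) (Fin p) ℝ)
      - A * A.transpose).PosSemidef := by
    refine Matrix.PosSemidef.of_dotProduct_mulVec_nonneg ?_ fun x => ?_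
    · unfold Matrix.IsHermitian
      rw [Matrix.conjTranspose_sub, Matrix.conjTranspose_add, Matrix.conjTranspose_smul,
        hpsdA.isHermitian.eq, hpsdAbar.isHermitian.eq]
      simp
    · have hsx : star x = x := by simp
      rw [hsx, Matrix.sub_mulVec, Matrix.add_mulVec, Matrix.smul_mulVec,
        Matrix.one_mulVec, dotProduct_sub, dotProduct_add, dotProduct_smul,
        my_quad A x, my_quad Abar x, smul_eq_mul]
      set nx2 : ℝ := ∑ j, x j ^ 2 with hnx2def
      have hnx2 : 0 ≤ nx2 := Finset.sum_nonneg fun j _ => sq_nonneg _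
      have hxdot : dotProduct x x = nx2 := by
        simp only [dotProduct, hnx2def]
        congr 1; ext j; ring
      rw [hxdot]
      have hper : ∀ i : Fin n, (∑ j, A j i * x j) ^ 2 - (∑ j, Abar j i * x j) ^ 2
          ≤ 3 * C * ε * nx2 := by
        intro i
        set f : ℝ := ∑ j, A j i * x j
        set g : ℝ := ∑ j, Abar j i * x j
        have hfg : f - g = ∑ j, (A j i - Abar j i) * x j := by
          rw [← Finset.sum_sub_distrib]
          congr 1; ext j; ring
        have hfg2 : f + g = ∑ j, (A j i + Abar j i) * x j := by
          rw [← Finset.sum_add_distrib]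
          congr 1; ext j; ring
        have hd : |f - g| ≤ ε * Real.sqrt nx2 := by
          rw [hfg]
          refine le_trans (my_cs_abs _ x) ?_
          exact mul_le_mul_of_nonneg_right (hdiff i) (Real.sqrt_nonneg _)
        have hAbarnorm : Real.sqrt (∑ j, (Abar j i) ^ 2) ≤ C + ε := by
          have : ∀ j, Abar j i = A j i + (Abar j i - A j i) := fun j => by ring
          calc Real.sqrt (∑ j, (Abar j i) ^ 2)
              = Real.sqrt (∑ j, (A j i + (Abar j i - A j i)) ^ 2) := by
                congr 1; exact Finset.sum_congr rfl fun j _ => by rw [← this j]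
            _ ≤ Real.sqrt (∑ j, (A j i) ^ 2) + Real.sqrt (∑ j, (Abar j i - A j i) ^ 2) :=
                my_tri _ _
            _ ≤ C + ε := by
                refine add_le_add (hnorm i) ?_
                have : ∀ j, (Abar j i - A j i) ^ 2 = (A j i - Abar j i) ^ 2 := fun j => by ring
                rw [Finset.sum_congr rfl fun j _ => this j]
                exact hdiff i
        have hs : |f + g| ≤ 3 * C * Real.sqrt nx2 := by
          rw [hfg2]
          refine le_trans (my_cs_abs _ x) ?_
          have hsum : Real.sqrt (∑ j, (A j i + Abar j i) ^ 2) ≤ 3 * C := by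
            calc Real.sqrt (∑ j, (A j i + Abar j i) ^ 2)
                ≤ Real.sqrt (∑ j, (A j i) ^ 2) + Real.sqrt (∑ j, (Abar j i) ^ 2) :=
                  my_tri _ _
              _ ≤ C + (C + ε) := add_le_add (hnorm i) hAbarnorm
              _ ≤ 3 * C := by linarith
          exact mul_le_mul_of_nonneg_right hsum (Real.sqrt_nonneg _)
        have habs : |f - g| * |f + g| ≤ (ε * Real.sqrt nx2) * (3 * C * Real.sqrt nx2) :=
          mul_le_mul hd hs (abs_nonneg _) (by positivity)
        have hsq : Real.sqrt nx2 * Real.sqrt nx2 = nx2 := Real.mul_self_sqrt hnx2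
        calc f ^ 2 - g ^ 2 = (f - g) * (f + g) := by ring
          _ ≤ |f - g| * |f + g| := by
              calc (f - g) * (f + g) ≤ |(f - g) * (f + g)| := le_abs_self _
                _ = |f - g| * |f + g| := abs_mul _ _
          _ ≤ (ε * Real.sqrt nx2) * (3 * C * Real.sqrt nx2) := habs
          _ = 3 * C * ε * nx2 := by linear_combination 3 * C * ε * hsq
      have hsum : (∑ i, (∑ j, A j i * x j) ^ 2) - (∑ i, (∑ j, Abar j i * x j) ^ 2)
          ≤ δ * nx2 := by
        rw [← Finset.sum_sub_distrib]
        calc ∑ i : Fin n, ((∑ j, A j i * x j) ^ 2 - (∑ j, Abar j i * x j) ^ 2)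
            ≤ ∑ _i : Fin n, 3 * C * ε * nx2 := Finset.sum_le_sum fun i _ => hper i
          _ = n * (3 * C * ε * nx2) := by rw [Finset.sum_const]; simp
          _ = δ * nx2 := by rw [hδdef]; ring
      linarith
  -- assemble
  set M : Matrix (Fin p) (Fin p) ℝ := 1 + A * A.transpose with hMdef
  set Mbar : Matrix (Fin p) (Fin p) ℝ := 1 + Abar * Abar.transpose with hMbardef
  set N : Matrix (Fin p) (Fin p) ℝ := (1 + δ) • Mbar with hNdef
  have hsub : (N - M).PosSemidef := by
    have heq : N - M = (Abar * Abar.transpose + δ • (1 : Matrix (Fin p) (Fin p) ℝ)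
        - A * A.transpose) + δ • (Abar * Abar.transpose) := by
      rw [hNdef, hMdef, hMbardef]
      module
    rw [heq]
    exact hkey.add (my_smul_psd hδ hpsdAbar)
  have hdetle : M.det ≤ N.det := my_det_mono M N hM hsub
  have hdetN : N.det = (1 + δ) ^ p * Mbar.det := by
    rw [hNdef, Matrix.det_smul, Fintype.card_fin]
  have hMpos : 0 < M.det := hM.det_pos
  have hMbarpos : 0 < Mbar.det := hMbar.det_pos
  have h1δ : (0:ℝ) < 1 + δ := by linarith
  calc Real.log M.det ≤ Real.log N.det := Real.log_le_log hMpos hdetle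
    _ = Real.log ((1 + δ) ^ p * Mbar.det) := by rw [hdetN]
    _ = Real.log ((1 + δ) ^ p) + Real.log Mbar.det :=
        Real.log_mul (by positivity) (ne_of_gt hMbarpos)
    _ = p * Real.log (1 + δ) + Real.log Mbar.det := by rw [Real.log_pow]
    _ = Real.log Mbar.det + p * Real.log (1 + 3 * C * n * ε) := by rw [hδdef]; ring
end

section
/- Let A = [a₁ … a_n] and Ā = [ā₁ … ā_n] be p×n real matrices with ‖a_i − ā_i‖ ≤ ε and ‖a_i‖ ≤ C for all i, where 0 < ε ≤ C. Then log det(I_p + A Aᵀ) ≤ log det(I_n + Āᵀ Ā) + 3C n^{3/2} ε. -/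
open Matrix Finset
open scoped RealInnerProductSpace
open scoped MatrixOrder

section aux
variable {n : ℕ}

lemma my_trace_eq_sum_eigenvalues {Y : Matrix (Fin n) (Fin n) ℝ} (hY : Y.IsHermitian) :
    Y.trace = ∑ i, hY.eigenvalues i := by
  conv_lhs => rw [hY.spectral_theorem]
  rw [Unitary.conjStarAlgAut_apply, Matrix.trace_mul_cycle, Unitary.coe_star_mul_self]
  simp [Matrix.trace_diagonal]

lemma my_det_le_exp {Y : Matrix (Fin n) (Fin n) ℝ} (hY : Y.PosSemidef) :
    Y.det ≤ Real.exp (Y.trace - n) := by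
  have hH := hY.isHermitian
  have hdet : Y.det = ∏ i, hH.eigenvalues i := by
    simpa using hH.det_eq_prod_eigenvalues
  rw [hdet, my_trace_eq_sum_eigenvalues hH]
  calc ∏ i, hH.eigenvalues i ≤ ∏ i, Real.exp (hH.eigenvalues i - 1) := by
        apply Finset.prod_le_prod
        · intro i _; exact hY.eigenvalues_nonneg i
        · intro i _
          have := Real.add_one_le_exp (hH.eigenvalues i - 1); linarith
    _ = Real.exp (∑ i, (hH.eigenvalues i - 1)) := by rw [Real.exp_sum]
    _ = Real.exp (∑ i, hH.eigenvalues i - n) := by rw [Finset.sum_sub_distrib]; simp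

lemma my_trace_nonneg {Y : Matrix (Fin n) (Fin n) ℝ} (hY : Y.PosSemidef) :
    0 ≤ Y.trace := by
  rw [my_trace_eq_sum_eigenvalues hY.isHermitian]
  exact Finset.sum_nonneg fun i _ => hY.eigenvalues_nonneg i

lemma my_inner_bound {p : ℕ} (x x' y y' : EuclideanSpace ℝ (Fin p)) (ε C : ℝ)
    (hε : 0 ≤ ε) (hεC : ε ≤ C)
    (hxy : ‖x - y‖ ≤ ε) (hx'y' : ‖x' - y'‖ ≤ ε) (hx : ‖x‖ ≤ C) (hx' : ‖x'‖ ≤ C) :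
    |⟪x, x'⟫ - ⟪y, y'⟫| ≤ 3 * C * ε := by
  have key : ⟪x, x'⟫ - ⟪y, y'⟫ = ⟪x - y, x'⟫ + ⟪y, x' - y'⟫ := by
    rw [inner_sub_left, inner_sub_right]; ring
  have h1 : |⟪x - y, x'⟫| ≤ ε * C :=
    (abs_real_inner_le_norm _ _).trans (by
      have := norm_nonneg (x - y); have := norm_nonneg x'; nlinarith)
  have hy : ‖y‖ ≤ C + ε := by
    have h : y = x - (x - y) := by abel
    calc ‖y‖ = ‖x - (x - y)‖ := by rw [← h]
      _ ≤ ‖x‖ + ‖x - y‖ := norm_sub_le _ _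
      _ ≤ C + ε := add_le_add hx hxy
  have h2 : |⟪y, x' - y'⟫| ≤ (C + ε) * ε :=
    (abs_real_inner_le_norm _ _).trans (by
      have := norm_nonneg y; have := norm_nonneg (x' - y'); nlinarith)
  calc |⟪x, x'⟫ - ⟪y, y'⟫| ≤ |⟪x - y, x'⟫| + |⟪y, x' - y'⟫| := by
        rw [key]; exact abs_add_le _ _
    _ ≤ ε * C + (C + ε) * ε := add_le_add h1 h2
    _ ≤ 3 * C * ε := by nlinarith

lemma my_rpow (n : ℕ) : ((n : ℝ)) ^ ((3 : ℝ) / 2) = n * Real.sqrt n := by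
  rcases Nat.eq_zero_or_pos n with h | h
  · subst h
    rw [Nat.cast_zero, Real.zero_rpow (by norm_num)]
    simp
  · have h0 : (0 : ℝ) < n := by exact_mod_cast h
    rw [show (3 : ℝ) / 2 = 1 + 1 / 2 by norm_num, Real.rpow_add h0, Real.rpow_one,
      Real.sqrt_eq_rpow]
end aux

theorem logdet_perturb_second {p n : ℕ} (A Abar : Matrix (Fin p) (Fin n) ℝ) (ε C : ℝ)
    (hε : 0 < ε) (hεC : ε ≤ C)
    (hdiff : ∀ i : Fin n, Real.sqrt (∑ j, (A j i - Abar j i) ^ 2) ≤ ε)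
    (hnorm : ∀ i : Fin n, Real.sqrt (∑ j, (A j i) ^ 2) ≤ C) :
    Real.log ((1 + A * A.transpose).det) ≤
      Real.log ((1 + Abar.transpose * Abar).det) + 3 * C * (n : ℝ) ^ ((3 : ℝ) / 2) * ε := by
  have hC : (0:ℝ) < C := hε.trans_le hεC
  set B : Matrix (Fin n) (Fin n) ℝ := A.transpose * A with hBdef
  set Bb : Matrix (Fin n) (Fin n) ℝ := Abar.transpose * Abar with hBbdef
  have hB : B.PosSemidef := by
    rw [hBdef, ← Matrix.conjTranspose_eq_transpose_of_trivial]
    exact Matrix.posSemidef_conjTranspose_mul_self A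
  have hBb : Bb.PosSemidef := by
    rw [hBbdef, ← Matrix.conjTranspose_eq_transpose_of_trivial]
    exact Matrix.posSemidef_conjTranspose_mul_self Abar
  set M : Matrix (Fin n) (Fin n) ℝ := 1 + Bb with hMdef
  have hM : M.PosDef := Matrix.PosDef.one.add_posSemidef hBb
  have h1B : (1 + B).PosDef := Matrix.PosDef.one.add_posSemidef hB
  have hMdet : 0 < M.det := hM.det_pos
  have hMunit : IsUnit M.det := isUnit_iff_ne_zero.mpr hMdet.ne'
  -- the square root of M
  set S : Matrix (Fin n) (Fin n) ℝ := CFC.sqrt M with hSdef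
  have hS : S.PosSemidef := (CFC.sqrt_nonneg M).posSemidef
  have hSS : S * S = M := CFC.sqrt_mul_sqrt_self M hM.posSemidef.nonneg
  have hdetS : S.det * S.det = M.det := by rw [← Matrix.det_mul, hSS]
  have hdetS0 : S.det ≠ 0 := by
    intro h; rw [h, mul_zero] at hdetS; exact hMdet.ne (hdetS)
  have hSinvH : (S⁻¹).IsHermitian := hS.isHermitian.inv
  -- congruent matrix Y
  set Y : Matrix (Fin n) (Fin n) ℝ := S⁻¹ * (1 + B) * S⁻¹ with hYdef
  have hY : Y.PosSemidef := by
    have := h1B.posSemidef.mul_mul_conjTranspose_same (S⁻¹)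
    rwa [hSinvH.eq] at this
  have hdetSinv : (S⁻¹).det = (S.det)⁻¹ := by
    rw [Matrix.det_nonsing_inv, Ring.inverse_eq_inv]
  have hdetY : (1 + B).det = M.det * Y.det := by
    rw [hYdef, Matrix.det_mul, Matrix.det_mul, hdetSinv, ← hdetS]
    field_simp
  -- inverse of M
  set N : Matrix (Fin n) (Fin n) ℝ := M⁻¹ with hNdef
  have hNH : N.IsHermitian := hM.isHermitian.inv
  have hMN : M * N = 1 := Matrix.mul_nonsing_inv M hMunit
  have hNM : N * M = 1 := Matrix.nonsing_inv_mul M hMunit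
  have hSinvSinv : S⁻¹ * S⁻¹ = N := by rw [hNdef, ← hSS, Matrix.mul_inv_rev]
  -- trace of Y
  set Δ : Matrix (Fin n) (Fin n) ℝ := B - Bb with hΔdef
  have hMΔ : M + Δ = 1 + B := by rw [hMdef, hΔdef]; abel
  have htrY : Y.trace = n + (N * Δ).trace := by
    rw [hYdef, Matrix.trace_mul_cycle, hSinvSinv, ← hMΔ, Matrix.mul_add, hNM,
      Matrix.trace_add, Matrix.trace_one]
    simp
  -- entrywise bound on Δ
  have hΔbound : ∀ i j, |Δ i j| ≤ 3 * C * ε := by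
    intro i j
    have hent : Δ i j = (∑ k, A k i * A k j) - (∑ k, Abar k i * Abar k j) := by
      simp [hΔdef, hBdef, hBbdef, Matrix.sub_apply, Matrix.mul_apply, Matrix.transpose_apply]
    set x : Fin n → EuclideanSpace ℝ (Fin p) := fun i => (WithLp.equiv 2 _).symm (fun k => A k i)
      with hxdef
    set y : Fin n → EuclideanSpace ℝ (Fin p) := fun i => (WithLp.equiv 2 _).symm (fun k => Abar k i)
      with hydef
    have hnormx : ∀ i, ‖x i‖ = Real.sqrt (∑ k, (A k i) ^ 2) := by
      intro i; rw [EuclideanSpace.norm_eq]; congr 1; apply Finset.sum_congr rfl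
      intro k _; rw [Real.norm_eq_abs, sq_abs]; rfl
    have hnormxy : ∀ i, ‖x i - y i‖ = Real.sqrt (∑ k, (A k i - Abar k i) ^ 2) := by
      intro i; rw [EuclideanSpace.norm_eq]; congr 1; apply Finset.sum_congr rfl
      intro k _; rw [Real.norm_eq_abs, sq_abs]; rfl
    have hinnerx : ∀ i j, ⟪x i, x j⟫ = ∑ k, A k i * A k j := by
      intro i j; rw [PiLp.inner_apply]; simp [hxdef, mul_comm]
    have hinnery : ∀ i j, ⟪y i, y j⟫ = ∑ k, Abar k i * Abar k j := by
      intro i j; rw [PiLp.inner_apply]; simp [hydef, mul_comm]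
    rw [hent, ← hinnerx, ← hinnery]
    exact my_inner_bound (x i) (x j) (y i) (y j) ε C hε.le hεC
      (by rw [hnormxy i]; exact hdiff i)
      (by rw [hnormxy j]; exact hdiff j)
      (by rw [hnormx i]; exact hnorm i)
      (by rw [hnormx j]; exact hnorm j)
  -- trace (N * N) ≤ n
  have htrNN : (N * N).trace ≤ n := by
    have hMM1 : (M * M - 1).PosSemidef := by
      have h : M * M - 1 = Bb + (Bb + Bb * Bb) := by rw [hMdef]; noncomm_ring
      rw [h]
      have hBbBb : (Bb * Bb).PosSemidef := by
        have h2 := Matrix.posSemidef_conjTranspose_mul_self Bb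
        rwa [hBb.isHermitian.eq] at h2
      exact hBb.add (hBb.add hBbBb)
    have hcong : (1 - N * N).PosSemidef := by
      have := hMM1.mul_mul_conjTranspose_same N
      rwa [hNH.eq, Matrix.mul_sub, Matrix.sub_mul, Matrix.mul_one, ← Matrix.mul_assoc,
        Matrix.mul_assoc (N * M), hMN, hNM, Matrix.one_mul] at this
    have := my_trace_nonneg hcong
    rw [Matrix.trace_sub, Matrix.trace_one] at this
    simpa using this
  -- trace (N * Δ) bound
  have hsymmN : ∀ i j, N i j = N j i := by
    intro i j
    conv_lhs => rw [← hNH.eq]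
    simp [Matrix.conjTranspose_apply]
  have htrace_expand : (N * Δ).trace = ∑ i, ∑ j, N i j * Δ j i := by
    simp [Matrix.trace, Matrix.diag, Matrix.mul_apply]
  have hF : ∑ i, ∑ j, (N i j) ^ 2 = (N * N).trace := by
    simp only [Matrix.trace, Matrix.diag, Matrix.mul_apply]
    apply Finset.sum_congr rfl; intro i _
    apply Finset.sum_congr rfl; intro j _
    rw [sq]; congr 1; exact hsymmN i j
  have hT0 : (0:ℝ) ≤ ∑ i, ∑ j, |N i j| :=
    Finset.sum_nonneg fun i _ => Finset.sum_nonneg fun j _ => abs_nonneg _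
  have hCS : (∑ i, ∑ j, |N i j|) ^ 2 ≤ (n:ℝ) ^ 2 * ∑ i, ∑ j, (N i j) ^ 2 := by
    have h := Finset.sum_mul_sq_le_sq_mul_sq Finset.univ
      (fun q : Fin n × Fin n => (1:ℝ)) (fun q : Fin n × Fin n => |N q.1 q.2|)
    simp only [one_mul, one_pow, sq_abs, Finset.sum_const, Finset.card_univ,
      Fintype.card_prod, Fintype.card_fin, nsmul_eq_mul, mul_one] at h
    calc (∑ i, ∑ j, |N i j|) ^ 2
        = (∑ q : Fin n × Fin n, |N q.1 q.2|) ^ 2 := by rw [Fintype.sum_prod_type]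
      _ ≤ ((n * n : ℕ) : ℝ) * (∑ q : Fin n × Fin n, (N q.1 q.2) ^ 2) := by exact_mod_cast h
      _ = (n:ℝ) ^ 2 * ∑ i, ∑ j, (N i j) ^ 2 := by
          rw [Fintype.sum_prod_type]; push_cast; ring
  have hTle : (∑ i, ∑ j, |N i j|) ≤ (n:ℝ) * Real.sqrt n := by
    have hFn : ∑ i, ∑ j, (N i j) ^ 2 ≤ (n:ℝ) := by rw [hF]; exact htrNN
    have hsq : Real.sqrt (n:ℝ) ^ 2 = (n:ℝ) := Real.sq_sqrt (Nat.cast_nonneg n)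
    have h1 : (∑ i, ∑ j, |N i j|) ^ 2 ≤ ((n:ℝ) * Real.sqrt n) ^ 2 := by
      have h2 : (n:ℝ) ^ 2 * (∑ i, ∑ j, (N i j) ^ 2) ≤ (n:ℝ) ^ 2 * (n:ℝ) :=
        mul_le_mul_of_nonneg_left hFn (sq_nonneg _)
      calc (∑ i, ∑ j, |N i j|) ^ 2 ≤ (n:ℝ) ^ 2 * ∑ i, ∑ j, (N i j) ^ 2 := hCS
        _ ≤ (n:ℝ) ^ 2 * (n:ℝ) := h2
        _ = ((n:ℝ) * Real.sqrt n) ^ 2 := by rw [mul_pow, hsq]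
    have hb : (0:ℝ) ≤ (n:ℝ) * Real.sqrt n := by positivity
    nlinarith [h1, hT0, hb]
  have htrNΔ : (N * Δ).trace ≤ 3 * C * ε * ((n:ℝ) * Real.sqrt n) := by
    calc (N * Δ).trace = ∑ i, ∑ j, N i j * Δ j i := htrace_expand
      _ ≤ ∑ i, ∑ j, |N i j| * (3 * C * ε) := by
          apply Finset.sum_le_sum; intro i _
          apply Finset.sum_le_sum; intro j _
          calc N i j * Δ j i ≤ |N i j * Δ j i| := le_abs_self _
            _ = |N i j| * |Δ j i| := abs_mul _ _
            _ ≤ |N i j| * (3 * C * ε) :=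
                mul_le_mul_of_nonneg_left (hΔbound j i) (abs_nonneg _)
      _ = (∑ i, ∑ j, |N i j|) * (3 * C * ε) := by rw [Finset.sum_mul]; simp [Finset.sum_mul]
      _ ≤ ((n:ℝ) * Real.sqrt n) * (3 * C * ε) :=
          mul_le_mul_of_nonneg_right hTle (by positivity)
      _ = 3 * C * ε * ((n:ℝ) * Real.sqrt n) := by ring
  -- assemble
  have hsylv : (1 + A * A.transpose).det = (1 + B).det := by
    rw [hBdef, ← Matrix.det_one_add_mul_comm]
  have hdet1B : 0 < (1 + B).det := h1B.det_pos
  have hYdetpos : 0 < Y.det := by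
    by_contra h
    push_neg at h
    nlinarith [hdetY]
  have hlogY : Real.log Y.det ≤ Y.trace - n := by
    calc Real.log Y.det ≤ Real.log (Real.exp (Y.trace - n)) :=
          Real.log_le_log hYdetpos (my_det_le_exp hY)
      _ = Y.trace - n := Real.log_exp _
  have hkey : Real.log ((1 + B).det) ≤ Real.log (M.det) + 3 * C * ε * ((n:ℝ) * Real.sqrt n) := by
    rw [hdetY, Real.log_mul hMdet.ne' hYdetpos.ne']
    have h2 : Y.trace - n ≤ 3 * C * ε * ((n:ℝ) * Real.sqrt n) := by
      rw [htrY]; linarith [htrNΔ]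
    linarith [hlogY]
  rw [hsylv, my_rpow]
  calc Real.log ((1 + B).det) ≤ Real.log (M.det) + 3 * C * ε * ((n:ℝ) * Real.sqrt n) := hkey
    _ = Real.log ((1 + Bb).det) + 3 * C * ((n:ℝ) * Real.sqrt n) * ε := by rw [hMdef]; ring
end
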